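/- arXiv:2212.13745 — 2 statements merged into one kernel-verified Lean document; each statement's English description precedes it below -/
import Mathlib

section
/- Let w : (0,∞) → [0,∞) be continuous with ∫₀^∞ w(s)/s ds < ∞, set E(r) = exp(−4π ∫_r^∞ w(s)/s ds) and E(0) = lim_{r→0} E(r). Then for every δ ∈ (0,1): δ ∫_δ^∞ E(r) w(r)/r² dr ≤ (1/(4π)) ( E(√δ) − E(δ) + √δ (1 − E(√δ)) ), and consequently δ ∫_δ^∞ E(r) w(r)/r² dr → 0 as δ → 0. -/
open Real MeasureTheory Set Filter

namespace DWIV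
variable (w : ℝ → ℝ)

noncomputable def F (r : ℝ) : ℝ := ∫ s in Set.Ioi r, w s / s

noncomputable def Efun (r : ℝ) : ℝ := Real.exp (-(4 * π) * F w r)

variable (hw : ∀ s, 0 ≤ w s) (hwc : ContinuousOn w (Set.Ioi 0))
    (hint : IntegrableOn (fun s => w s / s) (Set.Ioi 0) volume)

include hw in
lemma F_nonneg {r : ℝ} (hr : 0 ≤ r) : 0 ≤ F w r := by
  apply setIntegral_nonneg measurableSet_Ioi
  intro x hx
  exact div_nonneg (hw x) (le_of_lt (lt_of_le_of_lt hr hx))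

include hw in
lemma Efun_le_one {r : ℝ} (hr : 0 ≤ r) : Efun w r ≤ 1 := by
  rw [Efun, Real.exp_le_one_iff]
  have := F_nonneg w hw hr
  nlinarith [Real.pi_pos]

lemma Efun_pos (r : ℝ) : 0 < Efun w r := Real.exp_pos _

include hint in
lemma F_split {a b : ℝ} (ha : 0 ≤ a) (hab : a ≤ b) :
    F w a = (∫ s in a..b, w s / s) + F w b := by
  have h1 : Set.Ioc a b ∪ Set.Ioi b = Set.Ioi a := Set.Ioc_union_Ioi_eq_Ioi hab
  rw [intervalIntegral.integral_of_le hab]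
  unfold F
  rw [← h1, setIntegral_union (Set.Ioc_disjoint_Ioi le_rfl) measurableSet_Ioi
      (hint.mono_set (fun x hx => lt_of_le_of_lt ha hx.1))
      (hint.mono_set (Set.Ioi_subset_Ioi (ha.trans hab)))]

include hint hwc in
lemma hasDerivF {r : ℝ} (hr : 0 < r) : HasDerivAt (F w) (-(w r / r)) r := by
  set c := r / 2 with hc
  have hc0 : 0 < c := by positivity
  have key : ∀ x ∈ Set.Ioi (0:ℝ), F w x = F w c - ∫ s in c..x, w s / s := by
    intro x hx
    rcases le_or_gt c x with h | h
    · rw [F_split w hint hc0.le h]; ring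
    · rw [F_split w hint (le_of_lt hx) h.le, intervalIntegral.integral_symm]; ring
  have hci : ContinuousAt (fun s => w s / s) r := by
    have : ContinuousOn (fun s => w s / s) (Set.Ioi 0) :=
      hwc.div continuousOn_id (fun x hx => ne_of_gt hx)
    exact this.continuousAt (Ioi_mem_nhds hr)
  have hii : IntervalIntegrable (fun s => w s / s) volume c r := by
    apply (hint.mono_set ?_).intervalIntegrable
    rw [Set.uIcc_of_le (by linarith)]
    intro x hx; exact lt_of_lt_of_le hc0 hx.1
  have hD : HasDerivAt (fun x => F w c - ∫ s in c..x, w s / s) (-(w r / r)) r := by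
    have hmeas : StronglyMeasurableAtFilter (fun s => w s / s) (nhds r) volume :=
      ContinuousOn.stronglyMeasurableAtFilter isOpen_Ioi
        (hwc.div continuousOn_id (fun x hx => ne_of_gt hx)) r hr
    have h0 := intervalIntegral.integral_hasDerivAt_right hii hmeas hci
    have h3 := (hasDerivAt_const r (F w c)).sub h0
    simp only [zero_sub] at h3
    exact h3
  apply hD.congr_of_eventuallyEq
  filter_upwards [Ioi_mem_nhds hr] with x hx using key x hx

include hint hwc in
lemma hasDerivE {r : ℝ} (hr : 0 < r) :
    HasDerivAt (fun x => Efun w x / (4 * π)) (Efun w r * w r / r) r := by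
  have h1 := (((hasDerivF w hwc hint hr).const_mul (-(4 * π))).exp).div_const (4 * π)
  refine h1.congr_deriv ?_
  unfold Efun
  have hπ : (4:ℝ) * π ≠ 0 := by positivity
  field_simp

include hint hwc in
lemma contE : ContinuousOn (Efun w) (Set.Ioi 0) := by
  have hF : ContinuousOn (F w) (Set.Ioi 0) := fun x hx =>
    (hasDerivF w hwc hint hx).continuousAt.continuousWithinAt
  exact Real.continuous_exp.comp_continuousOn (continuousOn_const.mul hF)

include hint hwc in
lemma integral_Ew {a b : ℝ} (ha : 0 < a) (hab : a ≤ b) :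
    (∫ r in a..b, Efun w r * w r / r) = (Efun w b - Efun w a) / (4 * π) := by
  have hsub : Set.uIcc a b ⊆ Set.Ioi 0 := by
    rw [Set.uIcc_of_le hab]
    exact fun x hx => lt_of_lt_of_le ha hx.1
  have := intervalIntegral.integral_eq_sub_of_hasDerivAt
    (f := fun x => Efun w x / (4 * π)) (f' := fun r => Efun w r * w r / r)
    (fun x hx => hasDerivE w hwc hint (hsub hx)) ?_
  · rw [this]; ring
  · apply ContinuousOn.intervalIntegrable
    apply ContinuousOn.div
    · exact ((contE w hwc hint).mono hsub).mul (hwc.mono hsub)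
    · exact continuousOn_id.mono hsub |>.congr (fun x _ => rfl)
    · exact fun x hx => ne_of_gt (hsub hx)


include hw hwc hint in
lemma intEwr {a : ℝ} (ha : 0 < a) :
    IntegrableOn (fun r => Efun w r * w r / r) (Set.Ioi a) volume := by
  apply Integrable.mono' (hint.mono_set (Set.Ioi_subset_Ioi ha.le))
  · apply ContinuousOn.aestronglyMeasurable ?_ measurableSet_Ioi
    have hs : Set.Ioi a ⊆ Set.Ioi (0:ℝ) := Set.Ioi_subset_Ioi ha.le
    exact (((contE w hwc hint).mono hs).mul (hwc.mono hs)).div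
      (continuousOn_id.mono hs) (fun x hx => ne_of_gt (hs hx))
  · filter_upwards [ae_restrict_mem measurableSet_Ioi] with r hr
    have hr0 : 0 < r := lt_trans ha hr
    have h1 : 0 ≤ Efun w r * w r / r :=
      div_nonneg (mul_nonneg (Efun_pos w r).le (hw r)) hr0.le
    rw [Real.norm_of_nonneg h1, div_le_div_iff_of_pos_right hr0]
    nlinarith [Efun_le_one w hw hr0.le, Efun_pos w r, hw r]

include hw hwc hint in
lemma intEwr2 {a : ℝ} (ha : 0 < a) :
    IntegrableOn (fun r => Efun w r * w r / r ^ 2) (Set.Ioi a) volume := by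
  apply Integrable.mono' ((hint.mono_set (Set.Ioi_subset_Ioi ha.le)).const_mul (1/a))
  · apply ContinuousOn.aestronglyMeasurable ?_ measurableSet_Ioi
    have hs : Set.Ioi a ⊆ Set.Ioi (0:ℝ) := Set.Ioi_subset_Ioi ha.le
    exact (((contE w hwc hint).mono hs).mul (hwc.mono hs)).div
      ((continuousOn_id.mono hs).pow 2) (fun x hx => pow_ne_zero 2 (ne_of_gt (hs hx)))
  · filter_upwards [ae_restrict_mem measurableSet_Ioi] with r hr
    have hr0 : 0 < r := lt_trans ha hr
    have h1 : 0 ≤ Efun w r * w r / r ^ 2 :=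
      div_nonneg (mul_nonneg (Efun_pos w r).le (hw r)) (sq_nonneg r)
    rw [Real.norm_of_nonneg h1]
    have h2 : (1:ℝ)/a * (w r / r) = w r / (a * r) := by
      field_simp
    rw [h2, div_le_div_iff₀ (by positivity) (by positivity)]
    have hE1 := Efun_le_one w hw hr0.le
    have hE0 := (Efun_pos w r).le
    have hwr := hw r
    have hEw : Efun w r * w r ≤ w r := by nlinarith
    calc Efun w r * w r * (a * r) ≤ w r * (a * r) :=
          mul_le_mul_of_nonneg_right hEw (by positivity)
      _ ≤ w r * r ^ 2 := by
          have har : a * r ≤ r ^ 2 := by nlinarith [Set.mem_Ioi.mp hr]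
          exact mul_le_mul_of_nonneg_left har hwr


include hw hwc hint in
lemma integral_Ioi_Ew_le {a : ℝ} (ha : 0 < a) :
    (∫ r in Set.Ioi a, Efun w r * w r / r) ≤ (1 - Efun w a) / (4 * π) := by
  have hT := MeasureTheory.intervalIntegral_tendsto_integral_Ioi a
    (intEwr w hw hwc hint ha) (tendsto_id (x := atTop))
  apply le_of_tendsto hT
  filter_upwards [Filter.eventually_ge_atTop a] with b hb
  rw [id, integral_Ew w hwc hint ha hb]
  have hb0 : 0 ≤ b := le_trans ha.le hb
  have h1 := Efun_le_one w hw hb0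
  have h2 := (Efun_pos w a).le
  have hπ : (0:ℝ) < 4 * π := by positivity
  gcongr

include hint in
lemma tendstoF : Tendsto (F w) (nhdsWithin 0 (Set.Ioi 0)) (nhds (F w 0)) := by
  have hIcc : IntegrableOn (fun s => w s / s) (Set.Icc 0 1) volume := by
    rw [integrableOn_Icc_iff_integrableOn_Ioc]
    exact hint.mono_set (fun x hx => hx.1)
  have hcont := intervalIntegral.continuousOn_primitive (μ := volume)
    (f := fun s => w s / s) (a := (0:ℝ)) (b := 1) hIcc
  have h0 : ContinuousWithinAt (fun x => ∫ t in Set.Ioc 0 x, w t / t) (Set.Icc 0 1) 0 :=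
    hcont 0 (by norm_num)
  have h0' : Tendsto (fun x => ∫ t in Set.Ioc 0 x, w t / t)
      (nhdsWithin 0 (Set.Icc 0 1)) (nhds 0) := by
    have : (∫ t in Set.Ioc (0:ℝ) 0, w t / t) = 0 := by simp
    simpa [ContinuousWithinAt, this] using h0
  have h1 : Tendsto (fun x => F w 0 - ∫ t in Set.Ioc 0 x, w t / t)
      (nhdsWithin 0 (Set.Icc 0 1)) (nhds (F w 0)) := by
    simpa using (tendsto_const_nhds (x := F w 0)).sub h0'
  have h2 : Tendsto (fun x => F w 0 - ∫ t in Set.Ioc 0 x, w t / t)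
      (nhdsWithin 0 (Set.Ioc 0 1)) (nhds (F w 0)) :=
    h1.mono_left (nhdsWithin_mono 0 Set.Ioc_subset_Icc_self)
  rw [← nhdsWithin_Ioc_eq_nhdsGT (zero_lt_one (α := ℝ))]
  apply h2.congr'
  filter_upwards [self_mem_nhdsWithin] with x hx
  have := F_split w hint (le_refl 0) hx.1.le
  rw [intervalIntegral.integral_of_le hx.1.le] at this
  linarith

include hint in
lemma tendstoE : Tendsto (Efun w) (nhdsWithin 0 (Set.Ioi 0)) (nhds (Efun w 0)) := by
  have := ((tendstoF w hint).const_mul (-(4 * π)))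
  exact (Real.continuous_exp.tendsto _).comp this

end DWIV

open DWIV

/-- With `w ≥ 0` continuous on `(0,∞)` and `∫₀^∞ w(s)/s ds < ∞`, set
`E r = exp(-4π ∫_r^∞ w(s)/s ds)`. Then for every `δ ∈ (0,1)`:
`δ ∫_δ^∞ E w / r² dr ≤ (1/4π)(E(√δ) - E(δ) + √δ (1 - E(√δ)))`, and hence
`δ ∫_δ^∞ E w / r² dr → 0` as `δ → 0⁺`. -/
theorem delta_weighted_integral_vanishes
    (w : ℝ → ℝ) (hw : ∀ s, 0 ≤ w s) (hwc : ContinuousOn w (Set.Ioi 0))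
    (hint : IntegrableOn (fun s => w s / s) (Set.Ioi 0) volume)
    (E : ℝ → ℝ)
    (hE : ∀ r, E r = Real.exp (-(4 * π) * ∫ s in Set.Ioi r, w s / s)) :
    (∀ δ : ℝ, δ ∈ Set.Ioo (0:ℝ) 1 →
      δ * (∫ r in Set.Ioi δ, E r * w r / r ^ 2)
        ≤ (1 / (4 * π)) *
            (E (Real.sqrt δ) - E δ + Real.sqrt δ * (1 - E (Real.sqrt δ)))) ∧
    Tendsto (fun δ : ℝ => δ * ∫ r in Set.Ioi δ, E r * w r / r ^ 2)
      (nhdsWithin 0 (Set.Ioi 0)) (nhds 0) := by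
  have hEe : E = Efun w := by
    funext r; rw [hE r]; rfl
  subst hEe
  have main : ∀ δ : ℝ, δ ∈ Set.Ioo (0:ℝ) 1 →
      δ * (∫ r in Set.Ioi δ, Efun w r * w r / r ^ 2)
        ≤ (1 / (4 * π)) *
            (Efun w (Real.sqrt δ) - Efun w δ
              + Real.sqrt δ * (1 - Efun w (Real.sqrt δ))) := by
    intro δ hδ
    obtain ⟨hδ0, hδ1⟩ := hδ
    set σ := Real.sqrt δ with hσdef
    have hσ0 : 0 < σ := Real.sqrt_pos.mpr hδ0
    have hσσ : σ * σ = δ := Real.mul_self_sqrt hδ0.le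
    have hδσ : δ ≤ σ := by nlinarith
    have intA : IntegrableOn (fun r => Efun w r * w r / r ^ 2) (Set.Ioc δ σ) volume :=
      (intEwr2 w hw hwc hint hδ0).mono_set Set.Ioc_subset_Ioi_self
    have intB : IntegrableOn (fun r => Efun w r * w r / r ^ 2) (Set.Ioi σ) volume :=
      intEwr2 w hw hwc hint hσ0
    have hsplit : (∫ r in Set.Ioi δ, Efun w r * w r / r ^ 2)
        = (∫ r in Set.Ioc δ σ, Efun w r * w r / r ^ 2)
          + ∫ r in Set.Ioi σ, Efun w r * w r / r ^ 2 := by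
      rw [← Set.Ioc_union_Ioi_eq_Ioi hδσ,
        setIntegral_union (Set.Ioc_disjoint_Ioi le_rfl) measurableSet_Ioi intA intB]
    have hA : δ * ∫ r in Set.Ioc δ σ, Efun w r * w r / r ^ 2
        ≤ (Efun w σ - Efun w δ) / (4 * π) := by
      rw [← MeasureTheory.integral_const_mul]
      have mono : (∫ r in Set.Ioc δ σ, δ * (Efun w r * w r / r ^ 2))
          ≤ ∫ r in Set.Ioc δ σ, Efun w r * w r / r := by
        apply setIntegral_mono_on (intA.const_mul δ)
          ((intEwr w hw hwc hint hδ0).mono_set Set.Ioc_subset_Ioi_self) measurableSet_Ioc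
        intro r hr
        have hr0 : 0 < r := hδ0.trans hr.1
        have hx : 0 ≤ Efun w r * w r := mul_nonneg (Efun_pos w r).le (hw r)
        have key : δ * (Efun w r * w r / r ^ 2)
            = (δ / r) * (Efun w r * w r / r) := by
          rw [pow_two, div_mul_div_comm, mul_div_assoc]; ring
        rw [key]
        exact mul_le_of_le_one_left (div_nonneg hx hr0.le)
          (div_le_one_of_le₀ hr.1.le hr0.le)
      refine mono.trans ?_
      rw [← intervalIntegral.integral_of_le hδσ, integral_Ew w hwc hint hδ0 hδσ]
    have hB : δ * ∫ r in Set.Ioi σ, Efun w r * w r / r ^ 2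
        ≤ σ * ((1 - Efun w σ) / (4 * π)) := by
      rw [← MeasureTheory.integral_const_mul]
      have mono : (∫ r in Set.Ioi σ, δ * (Efun w r * w r / r ^ 2))
          ≤ ∫ r in Set.Ioi σ, σ * (Efun w r * w r / r) := by
        apply setIntegral_mono_on (intB.const_mul δ)
          ((intEwr w hw hwc hint hσ0).const_mul σ) measurableSet_Ioi
        intro r hr
        have hr0 : 0 < r := hσ0.trans hr
        have hx : 0 ≤ Efun w r * w r := mul_nonneg (Efun_pos w r).le (hw r)
        have key : δ * (Efun w r * w r / r ^ 2)
            = (δ / r) * (Efun w r * w r / r) := by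
          rw [pow_two, div_mul_div_comm, mul_div_assoc]; ring
        rw [key]
        apply mul_le_mul_of_nonneg_right ?_ (div_nonneg hx hr0.le)
        rw [div_le_iff₀ hr0]
        nlinarith [Set.mem_Ioi.mp hr]
      refine mono.trans ?_
      rw [MeasureTheory.integral_const_mul]
      exact mul_le_mul_of_nonneg_left
        (integral_Ioi_Ew_le w hw hwc hint hσ0) hσ0.le
    rw [hsplit, mul_add]
    refine (add_le_add hA hB).trans_eq ?_
    have hπ : (4:ℝ) * π ≠ 0 := by positivity
    field_simp
  refine ⟨main, ?_⟩
  have hs : Tendsto Real.sqrt (nhdsWithin 0 (Set.Ioi 0)) (nhdsWithin 0 (Set.Ioi 0)) := by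
    apply tendsto_nhdsWithin_of_tendsto_nhds_of_eventually_within
    · have h := Real.continuous_sqrt.tendsto 0
      rw [Real.sqrt_zero] at h
      exact h.mono_left nhdsWithin_le_nhds
    · filter_upwards [self_mem_nhdsWithin] with x hx
      exact Real.sqrt_pos.mpr hx
  have T2 : Tendsto (Efun w) (nhdsWithin 0 (Set.Ioi 0)) (nhds (Efun w 0)) :=
    tendstoE w hint
  have T1 : Tendsto (fun δ => Efun w (Real.sqrt δ)) (nhdsWithin 0 (Set.Ioi 0))
      (nhds (Efun w 0)) := T2.comp hs
  have T3 : Tendsto Real.sqrt (nhdsWithin 0 (Set.Ioi 0)) (nhds 0) :=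
    hs.mono_right nhdsWithin_le_nhds
  have hub : Tendsto (fun δ => (1 / (4 * π)) *
      (Efun w (Real.sqrt δ) - Efun w δ
        + Real.sqrt δ * (1 - Efun w (Real.sqrt δ))))
      (nhdsWithin 0 (Set.Ioi 0)) (nhds 0) := by
    have h := ((T1.sub T2).add (T3.mul ((tendsto_const_nhds (x := (1:ℝ))).sub T1))).const_mul
      (1 / (4 * π))
    simpa using h
  apply tendsto_of_tendsto_of_tendsto_of_le_of_le' tendsto_const_nhds hub
  · filter_upwards [self_mem_nhdsWithin] with δ hδ
    apply mul_nonneg (le_of_lt hδ)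
    apply setIntegral_nonneg measurableSet_Ioi
    intro r hr
    exact div_nonneg (mul_nonneg (Efun_pos w r).le (hw r)) (sq_nonneg r)
  · filter_upwards [Ioo_mem_nhdsGT_of_mem ⟨le_refl (0:ℝ), zero_lt_one⟩] with δ hδ
    exact main δ hδ
end

section
/- Let u₀ > 0 and let ξ : [0,u₀] × (0,∞) → ℝ, E : [0,u₀] × (0,∞) → (0,1] be such that for each u, r ↦ ξ(u,r) is continuous with ξ(u,r) → 0 as r → 0, E(u,·) is nondecreasing in r and continuous, and suppose ∫₀^{u₀} ∫₀^{r₀} ξ(u,r)² / (r E(u,r)) dr du < ∞ for every r₀ > 0, together with the Sobolev bound sup_{r ∈ [0,r₀]} (ξ²/E)(u,r) ≤ C ( ∫₀^{r₀} ξ²/(rE)(u,r) dr + c⁴ r₀³ F(u) + (1/2π)(E(u,r₀) − E(u,0⁺)) ) for a continuous F and constant C. If additionally E is continuous up to r = 0 uniformly in u, then lim_{r→0} ∫₀^{u₀} (ξ²/E)(u,r) du = 0. -/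
open Real MeasureTheory intervalIntegral Set Filter

set_option maxHeartbeats 1000000

/-- Abstract final step for the key function `ξ/√(e^{ν+λ})`: continuity and
vanishing of `ξ` at the center, monotonicity/continuity of `E ∈ (0,1]` in `r`,
integrability of `ξ²/(r E)` over `[0,u₀] × (0,r₀]`, a pointwise Sobolev bound,
and uniform (in `u`) continuity of `E` up to `r = 0` together imply
`∫₀^{u₀} (ξ²/E)(u,r) du → 0` as `r → 0⁺`. -/
theorem xi_over_sqrtE_vanishes_at_center
    (u₀ : ℝ) (hu₀ : 0 < u₀)
    (ξ E : ℝ → ℝ → ℝ) (E0 : ℝ → ℝ) (C c : ℝ) (F : ℝ → ℝ)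
    (hF : Continuous F)
    (hξcont : ∀ u ∈ Set.Icc (0:ℝ) u₀, ContinuousOn (ξ u) (Set.Ioi 0))
    (hξ0 : ∀ u ∈ Set.Icc (0:ℝ) u₀,
      Tendsto (ξ u) (nhdsWithin 0 (Set.Ioi 0)) (nhds 0))
    (hEmono : ∀ u ∈ Set.Icc (0:ℝ) u₀, MonotoneOn (E u) (Set.Ioi 0))
    (hEcont : ∀ u ∈ Set.Icc (0:ℝ) u₀, ContinuousOn (E u) (Set.Ioi 0))
    (hErange : ∀ u ∈ Set.Icc (0:ℝ) u₀, ∀ r > (0:ℝ), E u r ∈ Set.Ioc (0:ℝ) 1)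
    (hInt : ∀ r₀ > (0:ℝ),
      IntegrableOn (fun p : ℝ × ℝ => ξ p.1 p.2 ^ 2 / (p.2 * E p.1 p.2))
        (Set.Icc 0 u₀ ×ˢ Set.Ioc 0 r₀) volume)
    (hSobolev : ∀ u ∈ Set.Icc (0:ℝ) u₀, ∀ r₀ > (0:ℝ), ∀ r ∈ Set.Ioc (0:ℝ) r₀,
      ξ u r ^ 2 / E u r
        ≤ C * ((∫ s in Set.Ioc (0:ℝ) r₀, ξ u s ^ 2 / (s * E u s))
            + c ^ 4 * r₀ ^ 3 * F u
            + (1 / (2 * π)) * (E u r₀ - E0 u)))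
    (hEunif : ∀ ε > (0:ℝ), ∃ r₀ > (0:ℝ), ∀ u ∈ Set.Icc (0:ℝ) u₀,
      ∀ r ∈ Set.Ioc (0:ℝ) r₀, |E u r - E0 u| ≤ ε) :
    Tendsto (fun r : ℝ => ∫ u in (0:ℝ)..u₀, ξ u r ^ 2 / E u r)
      (nhdsWithin 0 (Set.Ioi 0)) (nhds 0) := by
  set f : ℝ × ℝ → ℝ := fun p => ξ p.1 p.2 ^ 2 / (p.2 * E p.1 p.2) with hf_def
  -- nonnegativity of f on the relevant region
  have hfnn : ∀ r₀ > (0:ℝ), ∀ p ∈ Set.Icc (0:ℝ) u₀ ×ˢ Set.Ioc (0:ℝ) r₀, 0 ≤ f p := by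
    intro r₀ hr₀ p hp
    exact div_nonneg (sq_nonneg _)
      (mul_nonneg hp.2.1.le (hErange p.1 hp.1 p.2 hp.2.1).1.le)
  -- notation for the double integral
  set D : ℝ → ℝ := fun r₀ => ∫ p in Set.Icc (0:ℝ) u₀ ×ˢ Set.Ioc (0:ℝ) r₀, f p with hD_def
  have hDnn : ∀ r₀ > (0:ℝ), 0 ≤ D r₀ := by
    intro r₀ hr₀
    exact setIntegral_nonneg (measurableSet_Icc.prod measurableSet_Ioc) (hfnn r₀ hr₀)
  -- the double integral vanishes as r₀ → 0
  have hDsmall : ∀ ε > (0:ℝ), ∃ r₁ > (0:ℝ), D r₁ < ε := by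
    intro ε hε
    set s : ℕ → Set (ℝ × ℝ) := fun n => Set.Icc (0:ℝ) u₀ ×ˢ Set.Ioc (0:ℝ) (1 / (n + 1)) with hs_def
    have hmeas : ∀ n, MeasurableSet (s n) := fun n =>
      measurableSet_Icc.prod measurableSet_Ioc
    have hanti : Antitone s := by
      intro m n hmn
      refine Set.prod_mono_right (Set.Ioc_subset_Ioc_right ?_)
      have h1 : ((m:ℝ) + 1) ≤ (n:ℝ) + 1 := by exact_mod_cast Nat.succ_le_succ hmn
      exact one_div_le_one_div_of_le (by positivity) h1
    have hinter : ⋂ n, s n = ∅ := by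
      ext p
      simp only [s, Set.mem_iInter, Set.mem_empty_iff_false, iff_false]
      intro h
      obtain ⟨n, hn⟩ := exists_nat_one_div_lt (h 0).2.1
      exact absurd ((h n).2.2) (not_le.2 hn)
    have hfi : ∀ n : ℕ, IntegrableOn f (s n) volume := fun n =>
      hInt (1/((n:ℝ)+1)) (by positivity)
    have hlim := tendsto_setIntegral_of_antitone (f := f) (μ := volume) hmeas hanti ⟨0, hfi 0⟩
    rw [hinter] at hlim
    simp only [Measure.restrict_empty, integral_zero_measure] at hlim
    obtain ⟨n, hn⟩ := (hlim.eventually (eventually_lt_nhds hε)).exists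
    exact ⟨1 / ((n:ℝ) + 1), by positivity, hn⟩
  -- bound for F on the compact interval
  obtain ⟨M₀, hM₀⟩ := isCompact_Icc.exists_bound_of_continuousOn
    (s := Set.Icc (0:ℝ) u₀) hF.continuousOn
  set M : ℝ := max M₀ 0 with hM_def
  have hMnn : 0 ≤ M := le_max_right _ _
  have hFM : ∀ u ∈ Set.Icc (0:ℝ) u₀, |F u| ≤ M := fun u hu =>
    (hM₀ u hu).trans (le_max_left _ _)
  set B : ℝ := |C| + 1 with hB_def
  have hBpos : 0 < B := by positivity
  have hCB : |C| ≤ B := by simp [hB_def]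
  rw [Metric.tendsto_nhdsWithin_nhds]
  intro ε hε
  -- three smallness choices
  obtain ⟨r₁, hr₁pos, hr₁⟩ := hDsmall (ε / (6 * B)) (by positivity)
  set A : ℝ := B * c ^ 4 * M * u₀ + 1 with hA_def
  have hApos : 0 < A := by positivity
  set r₂ : ℝ := min 1 (ε / (6 * A)) with hr₂_def
  have hr₂pos : 0 < r₂ := lt_min one_pos (by positivity)
  set ε' : ℝ := ε / (6 * B * u₀) with hε'_def
  have hε'pos : 0 < ε' := by positivity
  obtain ⟨r₃, hr₃pos, hr₃⟩ := hEunif ε' hε'pos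
  set r₀ : ℝ := min r₁ (min r₂ r₃) with hr₀_def
  have hr₀pos : 0 < r₀ := lt_min hr₁pos (lt_min hr₂pos hr₃pos)
  have hr₀r₁ : r₀ ≤ r₁ := min_le_left _ _
  have hr₀r₂ : r₀ ≤ r₂ := (min_le_right _ _).trans (min_le_left _ _)
  have hr₀r₃ : r₀ ≤ r₃ := (min_le_right _ _).trans (min_le_right _ _)
  refine ⟨r₀, hr₀pos, ?_⟩
  intro r hrmem hrdist
  have hrpos : 0 < r := hrmem
  have hrlt : r < r₀ := by
    rwa [Real.dist_eq, sub_zero, abs_of_pos hrpos] at hrdist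
  have hrIoc : r ∈ Set.Ioc (0:ℝ) r₀ := ⟨hrpos, hrlt.le⟩
  -- the inner integral as a function of u
  set I : ℝ → ℝ := fun u => ∫ s in Set.Ioc (0:ℝ) r₀, ξ u s ^ 2 / (s * E u s) with hI_def
  have hInn : ∀ u ∈ Set.Icc (0:ℝ) u₀, 0 ≤ I u := by
    intro u hu
    refine setIntegral_nonneg measurableSet_Ioc fun x hx => ?_
    exact div_nonneg (sq_nonneg _) (mul_nonneg hx.1.le (hErange u hu x hx.1).1.le)
  -- Fubini: integrability of I and value of its integral
  have hprod : Integrable f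
      ((volume.restrict (Set.Icc (0:ℝ) u₀)).prod (volume.restrict (Set.Ioc (0:ℝ) r₀))) := by
    rw [Measure.prod_restrict]
    exact hInt r₀ hr₀pos
  have hIint : IntegrableOn I (Set.Icc (0:ℝ) u₀) volume := by
    have := hprod.integral_prod_left
    exact this
  have hIint' : IntegrableOn I (Set.Ioc (0:ℝ) u₀) volume :=
    hIint.mono_set Set.Ioc_subset_Icc_self
  have hIeq : ∫ u in Set.Icc (0:ℝ) u₀, I u = D r₀ := by
    have := MeasureTheory.integral_integral (μ := volume.restrict (Set.Icc (0:ℝ) u₀))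
      (ν := volume.restrict (Set.Ioc (0:ℝ) r₀))
      (f := fun u s => ξ u s ^ 2 / (s * E u s)) hprod
    rw [this, Measure.prod_restrict]
    rfl
  -- the dominating function
  set K : ℝ := |C| * (c ^ 4 * r₀ ^ 3 * M + 1 / (2 * π) * ε') with hK_def
  set g : ℝ → ℝ := fun u => |C| * I u + K with hg_def
  have hgint : IntegrableOn g (Set.Ioc (0:ℝ) u₀) volume := by
    refine Integrable.add (hIint'.const_mul _) ?_
    exact integrableOn_const (C := K) measure_Ioc_lt_top.ne
  have hc4 : (0:ℝ) ≤ c ^ 4 := by positivity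
  have hpi : (0:ℝ) < 1 / (2 * π) := by
    have := Real.pi_pos; positivity
  -- pointwise bound
  have hfg : ∀ u ∈ Set.Ioc (0:ℝ) u₀, ξ u r ^ 2 / E u r ≤ g u := by
    intro u hu
    have hu' : u ∈ Set.Icc (0:ℝ) u₀ := Set.Ioc_subset_Icc_self hu
    have hS := hSobolev u hu' r₀ hr₀pos r hrIoc
    have hbound : |I u + c ^ 4 * r₀ ^ 3 * F u + 1 / (2 * π) * (E u r₀ - E0 u)|
        ≤ I u + c ^ 4 * r₀ ^ 3 * M + 1 / (2 * π) * ε' := by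
      calc |I u + c ^ 4 * r₀ ^ 3 * F u + 1 / (2 * π) * (E u r₀ - E0 u)|
          ≤ |I u + c ^ 4 * r₀ ^ 3 * F u| + |1 / (2 * π) * (E u r₀ - E0 u)| := abs_add_le _ _
        _ ≤ |I u| + |c ^ 4 * r₀ ^ 3 * F u| + |1 / (2 * π) * (E u r₀ - E0 u)| := by
            exact add_le_add (abs_add_le _ _) le_rfl
        _ ≤ I u + c ^ 4 * r₀ ^ 3 * M + 1 / (2 * π) * ε' := by
            refine add_le_add (add_le_add ?_ ?_) ?_
            · exact le_of_eq (abs_of_nonneg (hInn u hu'))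
            · rw [abs_mul, abs_of_nonneg (by positivity : (0:ℝ) ≤ c ^ 4 * r₀ ^ 3)]
              exact mul_le_mul_of_nonneg_left (hFM u hu') (by positivity)
            · rw [abs_mul, abs_of_nonneg hpi.le]
              exact mul_le_mul_of_nonneg_left
                (hr₃ u hu' r₀ ⟨hr₀pos, hr₀r₃⟩) hpi.le
    calc ξ u r ^ 2 / E u r
        ≤ C * (I u + c ^ 4 * r₀ ^ 3 * F u + 1 / (2 * π) * (E u r₀ - E0 u)) := hS
      _ ≤ |C * (I u + c ^ 4 * r₀ ^ 3 * F u + 1 / (2 * π) * (E u r₀ - E0 u))| := le_abs_self _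
      _ = |C| * |I u + c ^ 4 * r₀ ^ 3 * F u + 1 / (2 * π) * (E u r₀ - E0 u)| := abs_mul _ _
      _ ≤ |C| * (I u + c ^ 4 * r₀ ^ 3 * M + 1 / (2 * π) * ε') :=
          mul_le_mul_of_nonneg_left hbound (abs_nonneg C)
      _ = g u := by rw [hg_def, hK_def]; ring
  -- putting things together
  have hJnn : 0 ≤ ∫ u in Set.Ioc (0:ℝ) u₀, ξ u r ^ 2 / E u r := by
    refine setIntegral_nonneg measurableSet_Ioc fun u hu => ?_
    exact div_nonneg (sq_nonneg _)
      (hErange u (Set.Ioc_subset_Icc_self hu) r hrpos).1.le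
  have hJle : (∫ u in Set.Ioc (0:ℝ) u₀, ξ u r ^ 2 / E u r)
      ≤ ∫ u in Set.Ioc (0:ℝ) u₀, g u := by
    refine integral_mono_of_nonneg ?_ hgint ?_
    · exact (ae_restrict_iff' measurableSet_Ioc).2 (ae_of_all _ fun u hu =>
        div_nonneg (sq_nonneg _)
          (hErange u (Set.Ioc_subset_Icc_self hu) r hrpos).1.le)
    · exact (ae_restrict_iff' measurableSet_Ioc).2 (ae_of_all _ hfg)
  have hgval : (∫ u in Set.Ioc (0:ℝ) u₀, g u) = |C| * D r₀ + K * u₀ := by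
    rw [hg_def]
    rw [integral_add (hIint'.const_mul _)
      (integrableOn_const (C := K) measure_Ioc_lt_top.ne)]
    rw [MeasureTheory.integral_const_mul, MeasureTheory.setIntegral_const]
    have : ∫ u in Set.Ioc (0:ℝ) u₀, I u = D r₀ := by
      rw [setIntegral_congr_set Ioc_ae_eq_Icc, hIeq]
    rw [this]
    simp [Real.volume_Ioc, ENNReal.toReal_ofReal hu₀.le, mul_comm, hu₀.le]
  -- the three smallness bounds
  have hDmono : D r₀ ≤ D r₁ := by
    refine setIntegral_mono_set (hInt r₁ hr₁pos) ?_ ?_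
    · exact (ae_restrict_iff' (measurableSet_Icc.prod measurableSet_Ioc)).2
        (ae_of_all _ (hfnn r₁ hr₁pos))
    · exact HasSubset.Subset.eventuallyLE
        (Set.prod_mono_right (Set.Ioc_subset_Ioc_right hr₀r₁))
  have h1 : |C| * D r₀ ≤ ε / 6 := by
    have : |C| * D r₀ ≤ B * (ε / (6 * B)) :=
      mul_le_mul hCB (hDmono.trans hr₁.le) (hDnn r₀ hr₀pos) hBpos.le
    refine this.trans (le_of_eq ?_)
    field_simp
  have hr₀le1 : r₀ ≤ 1 := hr₀r₂.trans (min_le_left _ _)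
  have hr₀cube : r₀ ^ 3 ≤ r₀ := by
    calc r₀ ^ 3 ≤ r₀ ^ 1 := pow_le_pow_of_le_one hr₀pos.le hr₀le1 (by norm_num)
      _ = r₀ := pow_one _
  have h2 : |C| * (c ^ 4 * r₀ ^ 3 * M) * u₀ ≤ ε / 6 := by
    have hstep1 : |C| * (c ^ 4 * r₀ ^ 3 * M) * u₀ ≤ A * r₀ ^ 3 := by
      have : |C| * (c ^ 4 * r₀ ^ 3 * M) * u₀ = (|C| * c ^ 4 * M * u₀) * r₀ ^ 3 := by ring
      rw [this]
      refine mul_le_mul_of_nonneg_right ?_ (by positivity)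
      have : |C| * c ^ 4 * M * u₀ ≤ B * c ^ 4 * M * u₀ := by
        have := mul_le_mul_of_nonneg_right (mul_le_mul_of_nonneg_right
          (mul_le_mul_of_nonneg_right hCB hc4) hMnn) hu₀.le
        linarith
      rw [hA_def]; linarith
    have hstep2 : A * r₀ ^ 3 ≤ A * (ε / (6 * A)) := by
      refine mul_le_mul_of_nonneg_left ?_ hApos.le
      exact (hr₀cube.trans hr₀r₂).trans (min_le_right _ _)
    refine (hstep1.trans hstep2).trans (le_of_eq ?_)
    field_simp
  have h3 : |C| * (1 / (2 * π) * ε') * u₀ ≤ ε / 6 := by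
    have hhalf : 1 / (2 * π) ≤ 1 := by
      rw [div_le_one (by positivity : (0:ℝ) < 2 * π)]
      nlinarith [Real.pi_gt_three]
    have : |C| * (1 / (2 * π) * ε') * u₀ ≤ B * (1 * ε') * u₀ := by
      refine mul_le_mul_of_nonneg_right ?_ hu₀.le
      exact mul_le_mul hCB (mul_le_mul_of_nonneg_right hhalf hε'pos.le)
        (by positivity) hBpos.le
    refine this.trans (le_of_eq ?_)
    rw [one_mul, hε'_def]
    field_simp
  have hKu : K * u₀ ≤ ε / 6 + ε / 6 := by
    have : K * u₀ = |C| * (c ^ 4 * r₀ ^ 3 * M) * u₀ + |C| * (1 / (2 * π) * ε') * u₀ := by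
      rw [hK_def]; ring
    rw [this]
    exact add_le_add h2 h3
  have hfinal : (∫ u in Set.Ioc (0:ℝ) u₀, ξ u r ^ 2 / E u r) ≤ ε / 6 + (ε / 6 + ε / 6) :=
    hJle.trans (hgval ▸ add_le_add h1 hKu)
  rw [Real.dist_eq, sub_zero, intervalIntegral.integral_of_le hu₀.le]
  rw [abs_of_nonneg hJnn]
  linarith
end
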